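/- Let T be a compact metric space and g : T → T a continuous surjective map. Let t̄ = (t_0, t_1, …) ∈ Π_g be a sequence with g(t_{i+1}) = t_i for all i ≥ 0, and suppose t_i ∈ NW(g) for all i ≥ 0. Then t̄ is a non-wandering point of the shift map ĝ : Π_g → Π_g. -/

import Mathlib

/-- A point `x` is non-wandering for `h` if for every neighborhood `U` of `x`
there is `n ≥ 1` with `h^n(U) ∩ U ≠ ∅`. -/
def NonWandering {X : Type*} [TopologicalSpace X] (h : X → X) (x : X) : Prop :=
  ∀ U ∈ nhds x, ∃ n ≥ 1, (h^[n] '' U ∩ U).Nonempty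

/-- The inverse limit Π_g of a map g : T → T. -/
abbrev InvLim {T : Type*} (g : T → T) : Type _ :=
  {t : ℕ → T // ∀ i : ℕ, g (t (i + 1)) = t i}

/-- The shift map ĝ : Π_g → Π_g, ĝ(t_0, t_1, …) = (g(t_0), t_0, t_1, …). -/
def shiftMap {T : Type*} (g : T → T) (t : InvLim g) : InvLim g :=
  ⟨fun i => Nat.casesOn i (g (t.1 0)) fun j => t.1 j, by
    intro i
    cases i with
    | zero => rfl
    | succ j => exact t.2 j⟩

theorem invlim_coord {T : Type*} (g : T → T) (s : InvLim g) :
    ∀ k i, g^[k] (s.1 (i + k)) = s.1 i := by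
  intro k
  induction k with
  | zero => intro i; simp
  | succ k ih =>
    intro i
    rw [show i + (k + 1) = (i + 1) + k by omega, Function.iterate_succ_apply',
      ih (i + 1), s.2 i]

theorem invlim_ext {T : Type*} (g : T → T) (hgs : Function.Surjective g) (N : ℕ) (x : T) :
    ∃ s : InvLim g, s.1 N = x := by
  obtain ⟨r, hr⟩ := hgs.hasRightInverse
  refine ⟨⟨fun i => if i ≤ N then g^[N - i] x else r^[i - N] x, ?_⟩, by simp⟩
  intro i
  dsimp only
  by_cases h1 : i + 1 ≤ N
  · rw [if_pos h1, if_pos (by omega : i ≤ N),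
      ← Function.iterate_succ_apply' g (N - (i + 1)) x]
    congr 1; omega
  · rw [if_neg h1]
    by_cases h2 : i ≤ N
    · have hiN : i = N := by omega
      subst hiN
      rw [if_pos h2, show i + 1 - i = 1 by omega, Nat.sub_self]
      simp [hr x]
    · rw [if_neg h2, show i + 1 - N = (i - N) + 1 by omega,
        Function.iterate_succ_apply']
      exact hr _

theorem shift_coord {T : Type*} (g : T → T) (s : InvLim g) (N : ℕ) :
    (shiftMap g s).1 N = g (s.1 N) := by
  cases N with
  | zero => rfl
  | succ j => exact (s.2 j).symm

theorem shift_iter {T : Type*} (g : T → T) (s : InvLim g) (n N : ℕ) :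
    ((shiftMap g)^[n] s).1 N = g^[n] (s.1 N) := by
  induction n with
  | zero => rfl
  | succ n ih =>
    rw [Function.iterate_succ_apply', Function.iterate_succ_apply',
      shift_coord, ih]

/-- if t̄ = (t_0, t_1, …) ∈ Π_g has every t_i non-wandering for g,
then t̄ is non-wandering for the shift map ĝ. -/
theorem stmt5 {T : Type*} [MetricSpace T] [CompactSpace T]
    (g : T → T) (hgc : Continuous g) (hgs : Function.Surjective g)
    (tbar : InvLim g) (h : ∀ i : ℕ, NonWandering g (tbar.1 i)) :
    NonWandering (shiftMap g) tbar := by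
  intro U hU
  replace hU := (mem_nhds_subtype {t : ℕ → T | ∀ i, g (t (i + 1)) = t i} tbar U).1 hU
  obtain ⟨V, hV, hVU⟩ := hU
  rw [nhds_pi, Filter.mem_pi] at hV
  obtain ⟨I, hIfin, W, hW, hWV⟩ := hV
  obtain ⟨N, hN⟩ := hIfin.bddAbove
  have hNle : ∀ i ∈ I, i ≤ N := fun i hi => hN hi
  set Z : Set T := ⋂ i ∈ I, (g^[N - i]) ⁻¹' (W i) with hZ
  have hZn : Z ∈ nhds (tbar.1 N) := by
    rw [hZ]
    refine (Filter.biInter_mem hIfin).mpr fun i hi => ?_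
    refine ContinuousAt.preimage_mem_nhds (hgc.iterate (N - i)).continuousAt ?_
    have : g^[N - i] (tbar.1 N) = tbar.1 i := by
      have := invlim_coord g tbar (N - i) i
      rwa [show i + (N - i) = N from by have := hNle i hi; omega] at this
    rw [this]
    exact hW i
  have key : ∀ u : InvLim g, u.1 N ∈ Z → u ∈ U := by
    intro u hu
    apply hVU
    apply hWV
    intro i hi
    have h1 : g^[N - i] (u.1 N) = u.1 i := by
      have := invlim_coord g u (N - i) i
      rwa [show i + (N - i) = N from by have := hNle i hi; omega] at this
    have h2 := Set.mem_iInter₂.1 hu i hi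
    rwa [Set.mem_preimage, h1] at h2
  obtain ⟨n, hn1, y, ⟨x, hxZ, hxy⟩, hyZ⟩ := h N Z hZn
  obtain ⟨s, hs⟩ := invlim_ext g hgs N x
  refine ⟨n, hn1, (shiftMap g)^[n] s, ⟨s, key s (hs ▸ hxZ), rfl⟩, key _ ?_⟩
  rw [shift_iter, hs, hxy]
  exact hyZ
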